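/- There is an absolute constant C > 0 such that, as m, n → ∞ with m ≥ C log n and n ≥ C log m, the probability that a uniformly random m × n zero-one matrix is shattered tends to 1. -/

import Mathlib

open scoped Classical
open Finset

-- Lemma C: fiber count
lemma fiber_count {m : ℕ} {i₁ i₂ i₃ : Fin m} (h12 : i₁ ≠ i₂) (h13 : i₁ ≠ i₃)
    (h23 : i₂ ≠ i₃) (a b d : Bool) :
    (univ.filter fun c : Fin m → Bool => c i₁ = a ∧ c i₂ = b ∧ c i₃ = d).card
      = 2 ^ (m - 3) := by
  classical
  have hset : (univ.filter fun c : Fin m → Bool => c i₁ = a ∧ c i₂ = b ∧ c i₃ = d)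
      = Fintype.piFinset (fun i => if i = i₁ then {a} else if i = i₂ then {b}
          else if i = i₃ then {d} else Finset.univ) := by
    ext c
    simp only [Fintype.mem_piFinset, mem_filter, mem_univ, true_and]
    constructor
    · rintro ⟨h1, h2, h3⟩ i
      by_cases e1 : i = i₁
      · subst e1; simp [h1]
      · by_cases e2 : i = i₂
        · subst e2; simp [e1, h2]
        · by_cases e3 : i = i₃
          · subst e3; simp [e1, e2, h3]
          · simp [e1, e2, e3]
    · intro h
      refine ⟨?_, ?_, ?_⟩
      · have := h i₁; simpa using this
      · have := h i₂; simpa [h12.symm] using this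
      · have := h i₃; simpa [h13.symm, h23.symm] using this
  rw [hset, Fintype.card_piFinset]
  have hprod : ∀ i : Fin m,
      (if i = i₁ then ({a} : Finset Bool) else if i = i₂ then {b}
          else if i = i₃ then {d} else Finset.univ).card
        = if i ∈ ({i₁, i₂, i₃} : Finset (Fin m)) then 1 else 2 := by
    intro i
    by_cases e1 : i = i₁
    · subst e1; simp
    · by_cases e2 : i = i₂
      · subst e2; simp [e1]
      · by_cases e3 : i = i₃
        · subst e3; simp [e1, e2]
        · simp [e1, e2, e3]
  rw [Finset.prod_congr rfl (fun i _ => hprod i)]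

  rw [← Finset.prod_mul_prod_compl ({i₁, i₂, i₃} : Finset (Fin m))]
  have h1 : (∏ i ∈ ({i₁, i₂, i₃} : Finset (Fin m)), if i ∈ ({i₁, i₂, i₃} : Finset (Fin m)) then 1 else 2) = 1 :=
    Finset.prod_eq_one fun i hi => if_pos hi
  have h2 : (∏ i ∈ ({i₁, i₂, i₃} : Finset (Fin m))ᶜ, if i ∈ ({i₁, i₂, i₃} : Finset (Fin m)) then 1 else 2) = 2 ^ (m - 3) := by
    rw [Finset.prod_congr rfl fun i hi => if_neg (Finset.mem_compl.mp hi), Finset.prod_const,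
      Finset.card_compl]
    congr 1
    rw [Finset.card_insert_of_notMem (by simp [h12, h13]),
      Finset.card_insert_of_notMem (by simp [h23]), Finset.card_singleton]
    simp
  rw [h1, h2, one_mul]

lemma triple_count {m : ℕ} {i₁ i₂ i₃ : Fin m} (h12 : i₁ ≠ i₂) (h13 : i₁ ≠ i₃)
    (h23 : i₂ ≠ i₃) (T : Finset (Bool × Bool × Bool)) :
    (univ.filter fun c : Fin m → Bool => (c i₁, c i₂, c i₃) ∈ T).card
      = T.card * 2 ^ (m - 3) := by
  classical
  rw [Finset.card_eq_sum_card_fiberwise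
    (f := fun c : Fin m → Bool => (c i₁, c i₂, c i₃)) (t := T)
    (s := univ.filter fun c : Fin m → Bool => (c i₁, c i₂, c i₃) ∈ T)
    (fun c hc => (mem_filter.mp hc).2)]
  have : ∀ t ∈ T,
      ((univ.filter fun c : Fin m → Bool => (c i₁, c i₂, c i₃) ∈ T).filter
        fun c => (c i₁, c i₂, c i₃) = t).card = 2 ^ (m - 3) := by
    intro t ht
    have : ((univ.filter fun c : Fin m → Bool => (c i₁, c i₂, c i₃) ∈ T).filter
        fun c => (c i₁, c i₂, c i₃) = t)
        = univ.filter fun c : Fin m → Bool => c i₁ = t.1 ∧ c i₂ = t.2.1 ∧ c i₃ = t.2.2 := by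
      ext c
      simp only [mem_filter, mem_univ, true_and, Prod.ext_iff]
      constructor
      · rintro ⟨-, h⟩; exact h
      · rintro ⟨h1, h2, h3⟩
        refine ⟨?_, h1, h2, h3⟩
        rw [h1, h2, h3]
        exact ht
    rw [this, fiber_count h12 h13 h23]
  rw [Finset.sum_congr rfl this, Finset.sum_const, smul_eq_mul]

lemma matrix_count {m n : ℕ} {i₁ i₂ i₃ : Fin m} (h12 : i₁ ≠ i₂) (h13 : i₁ ≠ i₃)
    (h23 : i₂ ≠ i₃) (T : Finset (Bool × Bool × Bool)) :
    (univ.filter fun M : Fin m → Fin n → Bool =>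
        ∀ j, (M i₁ j, M i₂ j, M i₃ j) ∈ T).card
      = (T.card * 2 ^ (m - 3)) ^ n := by
  classical
  have key : (univ.filter fun M : Fin m → Fin n → Bool =>
        ∀ j, (M i₁ j, M i₂ j, M i₃ j) ∈ T).card
      = (Fintype.piFinset fun _ : Fin n =>
          univ.filter fun c : Fin m → Bool => (c i₁, c i₂, c i₃) ∈ T).card := by
    apply Finset.card_bij' (fun M _ => Function.swap M) (fun f _ => Function.swap f)
    · intro M hM
      simp only [mem_filter, mem_univ, true_and] at hM ⊢
      rw [Fintype.mem_piFinset]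
      intro j
      simp only [mem_filter, mem_univ, true_and]
      exact hM j
    · intro f hf
      rw [Fintype.mem_piFinset] at hf
      simp only [mem_filter, mem_univ, true_and]
      intro j
      have := hf j
      simp only [mem_filter, mem_univ, true_and] at this
      exact this
    · intro M _; rfl
    · intro f _; rfl
  rw [key, Fintype.card_piFinset]
  rw [Finset.prod_const, triple_count h12 h13 h23, Finset.card_univ, Fintype.card_fin]

/-- The "avoid" sets for the four patterns. -/
def avoidT : Fin 4 → Finset (Bool × Bool × Bool)
  | 0 => univ.filter fun t => ¬(t.1 = t.2.1 ∧ t.2.1 = t.2.2)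
  | 1 => univ.filter fun t => ¬(t.1 = t.2.1 ∧ t.2.1 ≠ t.2.2)
  | 2 => univ.filter fun t => ¬(t.1 = t.2.2 ∧ t.1 ≠ t.2.1)
  | 3 => univ.filter fun t => ¬(t.2.1 = t.2.2 ∧ t.1 ≠ t.2.1)

lemma avoidT_card (k : Fin 4) : (avoidT k).card = 6 := by
  fin_cases k <;> decide

/-- Condition on rows (first half of `Shattered`). -/
def RowCond {m n : ℕ} (M : Fin m → Fin n → Bool) : Prop :=
  ∀ i₁ i₂ i₃ : Fin m, i₁ ≠ i₂ → i₁ ≠ i₃ → i₂ ≠ i₃ →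
    (∃ j, M i₁ j = M i₂ j ∧ M i₂ j = M i₃ j) ∧
    (∃ j, M i₁ j = M i₂ j ∧ M i₂ j ≠ M i₃ j) ∧
    (∃ j, M i₁ j = M i₃ j ∧ M i₁ j ≠ M i₂ j) ∧
    (∃ j, M i₂ j = M i₃ j ∧ M i₁ j ≠ M i₂ j)

noncomputable def rowEvent (m n : ℕ) (q : (Fin m × Fin m × Fin m) × Fin 4) :
    Finset (Fin m → Fin n → Bool) :=
  have := Classical.propDecidable
  univ.filter fun M =>
    (q.1.1 ≠ q.1.2.1 ∧ q.1.1 ≠ q.1.2.2 ∧ q.1.2.1 ≠ q.1.2.2) ∧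
    ∀ j, (M q.1.1 j, M q.1.2.1 j, M q.1.2.2 j) ∈ avoidT q.2

lemma rowEvent_card_le (m n : ℕ) (q : (Fin m × Fin m × Fin m) × Fin 4) :
    (rowEvent m n q).card ≤ 6 ^ n * 2 ^ ((m - 3) * n) := by
  classical
  obtain ⟨⟨i₁, i₂, i₃⟩, k⟩ := q
  by_cases hd : i₁ ≠ i₂ ∧ i₁ ≠ i₃ ∧ i₂ ≠ i₃
  · obtain ⟨h12, h13, h23⟩ := hd
    have hsub : rowEvent m n ⟨⟨i₁, i₂, i₃⟩, k⟩ ⊆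
        univ.filter fun M : Fin m → Fin n → Bool =>
          ∀ j, (M i₁ j, M i₂ j, M i₃ j) ∈ avoidT k := by
      intro M hM
      simp only [rowEvent, mem_filter, mem_univ, true_and] at hM ⊢
      exact hM.2
    calc (rowEvent m n ⟨⟨i₁, i₂, i₃⟩, k⟩).card
        ≤ _ := Finset.card_le_card hsub
      _ = ((avoidT k).card * 2 ^ (m - 3)) ^ n := matrix_count h12 h13 h23 _
      _ = 6 ^ n * 2 ^ ((m - 3) * n) := by
          rw [avoidT_card, mul_pow, ← pow_mul]
  · have : rowEvent m n ⟨⟨i₁, i₂, i₃⟩, k⟩ = ∅ := by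
      rw [Finset.eq_empty_iff_forall_notMem]
      intro M hM
      simp only [rowEvent, mem_filter, mem_univ, true_and] at hM
      exact hd hM.1
    simp [this]

lemma rowFail_bound (m n : ℕ) :
    (univ.filter fun M : Fin m → Fin n → Bool => ¬ RowCond M).card
      ≤ 4 * m ^ 3 * (6 ^ n * 2 ^ ((m - 3) * n)) := by
  classical
  have hsub : (univ.filter fun M : Fin m → Fin n → Bool => ¬ RowCond M)
      ⊆ univ.biUnion (rowEvent m n) := by
    intro M hM
    simp only [mem_filter, mem_univ, true_and, RowCond, not_forall,
      Classical.not_imp] at hM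
    obtain ⟨i₁, i₂, i₃, h12, h13, h23, hfail⟩ := hM
    rw [Finset.mem_biUnion]
    have mk : ∀ (k : Fin 4), (∀ j, (M i₁ j, M i₂ j, M i₃ j) ∈ avoidT k) →
        ∃ q ∈ (univ : Finset ((Fin m × Fin m × Fin m) × Fin 4)), M ∈ rowEvent m n q := by
      intro k hk
      refine ⟨⟨⟨i₁, i₂, i₃⟩, k⟩, mem_univ _, ?_⟩
      simp only [rowEvent, mem_filter, mem_univ, true_and]
      exact ⟨⟨h12, h13, h23⟩, hk⟩
    by_cases hA : ∃ j, M i₁ j = M i₂ j ∧ M i₂ j = M i₃ j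
    · by_cases hB : ∃ j, M i₁ j = M i₂ j ∧ M i₂ j ≠ M i₃ j
      · by_cases hC : ∃ j, M i₁ j = M i₃ j ∧ M i₁ j ≠ M i₂ j
        · by_cases hD : ∃ j, M i₂ j = M i₃ j ∧ M i₁ j ≠ M i₂ j
          · exact absurd ⟨hA, hB, hC, hD⟩ hfail
          · refine mk 3 fun j => ?_
            simp only [avoidT, mem_filter, mem_univ, true_and]
            exact fun hc => hD ⟨j, hc⟩
        · refine mk 2 fun j => ?_
          simp only [avoidT, mem_filter, mem_univ, true_and]
          exact fun hc => hC ⟨j, hc⟩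
      · refine mk 1 fun j => ?_
        simp only [avoidT, mem_filter, mem_univ, true_and]
        exact fun hc => hB ⟨j, hc⟩
    · refine mk 0 fun j => ?_
      simp only [avoidT, mem_filter, mem_univ, true_and]
      exact fun hc => hA ⟨j, hc⟩
  calc (univ.filter fun M : Fin m → Fin n → Bool => ¬ RowCond M).card
      ≤ (univ.biUnion (rowEvent m n)).card := Finset.card_le_card hsub
    _ ≤ ∑ q : (Fin m × Fin m × Fin m) × Fin 4, (rowEvent m n q).card :=
        Finset.card_biUnion_le
    _ ≤ ∑ _q : (Fin m × Fin m × Fin m) × Fin 4, 6 ^ n * 2 ^ ((m - 3) * n) :=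
        Finset.sum_le_sum fun q _ => rowEvent_card_le m n q
    _ = 4 * m ^ 3 * (6 ^ n * 2 ^ ((m - 3) * n)) := by
        rw [Finset.sum_const, Finset.card_univ]
        simp [Fintype.card_prod, pow_succ, smul_eq_mul]
        ring

/-- A 0-1 matrix is *shattered* if any three distinct rows realize all four
column-patterns `aaa`, `aab`, `aba`, `baa` (up to complement), and similarly
for any three distinct columns. -/
def Shattered {m n : ℕ} (M : Fin m → Fin n → Bool) : Prop :=
  (∀ i₁ i₂ i₃ : Fin m, i₁ ≠ i₂ → i₁ ≠ i₃ → i₂ ≠ i₃ →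
    (∃ j, M i₁ j = M i₂ j ∧ M i₂ j = M i₃ j) ∧
    (∃ j, M i₁ j = M i₂ j ∧ M i₂ j ≠ M i₃ j) ∧
    (∃ j, M i₁ j = M i₃ j ∧ M i₁ j ≠ M i₂ j) ∧
    (∃ j, M i₂ j = M i₃ j ∧ M i₁ j ≠ M i₂ j)) ∧
  (∀ j₁ j₂ j₃ : Fin n, j₁ ≠ j₂ → j₁ ≠ j₃ → j₂ ≠ j₃ →
    (∃ i, M i j₁ = M i j₂ ∧ M i j₂ = M i j₃) ∧
    (∃ i, M i j₁ = M i j₂ ∧ M i j₂ ≠ M i j₃) ∧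
    (∃ i, M i j₁ = M i j₃ ∧ M i j₁ ≠ M i j₂) ∧
    (∃ i, M i j₂ = M i j₃ ∧ M i j₁ ≠ M i j₂))

lemma shattered_iff {m n : ℕ} (M : Fin m → Fin n → Bool) :
    Shattered M ↔ RowCond M ∧ RowCond (Function.swap M) := Iff.rfl

lemma colFail_card (m n : ℕ) :
    (univ.filter fun M : Fin m → Fin n → Bool => ¬ RowCond (Function.swap M)).card
      = (univ.filter fun M : Fin n → Fin m → Bool => ¬ RowCond M).card := by
  apply Finset.card_bij' (fun M _ => Function.swap M) (fun f _ => Function.swap f)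
  · intro M hM
    simp only [mem_filter, mem_univ, true_and] at hM ⊢
    exact hM
  · intro f hf
    simp only [mem_filter, mem_univ, true_and] at hf ⊢
    exact hf
  · intro M _; rfl
  · intro f _; rfl

lemma bad_bound (m n : ℕ) :
    (univ.filter fun M : Fin m → Fin n → Bool => ¬ Shattered M).card
      ≤ 4 * m ^ 3 * (6 ^ n * 2 ^ ((m - 3) * n))
        + 4 * n ^ 3 * (6 ^ m * 2 ^ ((n - 3) * m)) := by
  have hsub : (univ.filter fun M : Fin m → Fin n → Bool => ¬ Shattered M)
      ⊆ (univ.filter fun M : Fin m → Fin n → Bool => ¬ RowCond M)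
        ∪ (univ.filter fun M : Fin m → Fin n → Bool => ¬ RowCond (Function.swap M)) := by
    intro M hM
    simp only [mem_filter, mem_univ, true_and, mem_union, shattered_iff] at hM ⊢
    exact not_and_or.mp hM
  calc (univ.filter fun M : Fin m → Fin n → Bool => ¬ Shattered M).card
      ≤ _ := Finset.card_le_card hsub
    _ ≤ (univ.filter fun M : Fin m → Fin n → Bool => ¬ RowCond M).card
        + (univ.filter fun M : Fin m → Fin n → Bool => ¬ RowCond (Function.swap M)).card :=
        Finset.card_union_le _ _
    _ ≤ _ := by
        rw [colFail_card]
        exact Nat.add_le_add (rowFail_bound m n) (rowFail_bound n m)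

lemma good_card (m n : ℕ) :
    (univ.filter fun M : Fin m → Fin n → Bool => Shattered M).card
      = 2 ^ (m * n) - (univ.filter fun M : Fin m → Fin n → Bool => ¬ Shattered M).card := by
  have h := Finset.card_filter_add_card_filter_not
    (s := (univ : Finset (Fin m → Fin n → Bool))) (p := fun M => Shattered M)
  have hcard : (univ : Finset (Fin m → Fin n → Bool)).card = 2 ^ (m * n) := by
    rw [Finset.card_univ]
    simp [Fintype.card_fun, ← pow_mul, mul_comm]
  omega

/-- The probability that a uniformly random `m × n` 0-1 matrix is shattered:
the number of shattered matrices divided by `2 ^ (m * n)`. -/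
noncomputable def shatteredProb (m n : ℕ) : ℝ :=
  ((Finset.univ.filter fun M : Fin m → Fin n → Bool => Shattered M).card : ℝ) /
    2 ^ (m * n)

lemma ratio_eq (m n : ℕ) (hm : 3 ≤ m) :
    ((4 * m ^ 3 * (6 ^ n * 2 ^ ((m - 3) * n)) : ℕ) : ℝ) / 2 ^ (m * n)
      = 4 * (m : ℝ) ^ 3 * (3 / 4 : ℝ) ^ n := by
  have hmn : m * n = (m - 3) * n + 3 * n := by
    rw [← Nat.add_mul, Nat.sub_add_cancel hm]
  have h8 : (2 : ℝ) ^ (3 * n) = 8 ^ n := by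
    rw [pow_mul]; norm_num
  have h64 : ((3 : ℝ) / 4) ^ n * 8 ^ n = 6 ^ n := by
    rw [← mul_pow]; norm_num
  push_cast
  rw [hmn, pow_add, h8, div_eq_iff (by positivity)]
  linear_combination (-4 * (m : ℝ) ^ 3 * 2 ^ ((m - 3) * n)) * h64

lemma anal (m n : ℕ) (hlog : 100 * Real.log m ≤ n) :
    4 * (m : ℝ) ^ 3 * (3 / 4 : ℝ) ^ n ≤ 4 * Real.exp (-(n : ℝ) / 5) := by
  by_cases hm : m = 0
  · subst hm
    have : ((3:ℝ)/4)^n ≤ 1 := pow_le_one₀ (by norm_num) (by norm_num)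
    have := Real.exp_pos (-(n : ℝ) / 5)
    simp
    positivity
  have hm0 : (0 : ℝ) < m := by
    have : 1 ≤ m := Nat.one_le_iff_ne_zero.mpr hm
    exact_mod_cast Nat.lt_of_lt_of_le Nat.zero_lt_one this
  have h1 : (m : ℝ) ^ 3 = Real.exp (3 * Real.log m) := by
    rw [show (3 : ℝ) * Real.log m = Real.log ((m:ℝ) ^ 3) by rw [Real.log_pow]; norm_num,
      Real.exp_log (by positivity)]
  have h2 : ((3 : ℝ) / 4) ^ n = Real.exp (n * Real.log (3 / 4)) := by
    rw [show (n : ℝ) * Real.log (3/4) = Real.log ((3/4 : ℝ) ^ n) by rw [Real.log_pow],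
      Real.exp_log (by positivity)]
  have hlog34 : Real.log (3 / 4) ≤ -1 / 4 := by
    rw [Real.log_le_iff_le_exp (by norm_num)]
    have := Real.add_one_le_exp (-1 / 4 : ℝ)
    linarith
  rw [h1, h2, mul_assoc, ← Real.exp_add]
  have hexp : 3 * Real.log m + n * Real.log (3 / 4) ≤ -(n : ℝ) / 5 := by
    have hb : (n : ℝ) * Real.log (3 / 4) ≤ (n : ℝ) * (-1 / 4) :=
      mul_le_mul_of_nonneg_left hlog34 (Nat.cast_nonneg n)
    linarith
  have := Real.exp_le_exp.mpr hexp
  linarith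

lemma small_exp (ε : ℝ) (hε : 0 < ε) (n : ℕ) (hn : 5 * Real.log (8 / ε) ≤ n) :
    4 * Real.exp (-(n : ℝ) / 5) ≤ ε / 2 := by
  have h1 : Real.exp (-(n : ℝ) / 5) ≤ ε / 8 := by
    have hlog : -(n : ℝ) / 5 ≤ Real.log (ε / 8) := by
      have : Real.log (ε / 8) = -Real.log (8 / ε) := by
        rw [← Real.log_inv, inv_div]
      linarith
    calc Real.exp (-(n : ℝ) / 5) ≤ Real.exp (Real.log (ε / 8)) := Real.exp_le_exp.mpr hlog
      _ = ε / 8 := Real.exp_log (by positivity)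
  linarith

theorem stmt_8 :
    ∃ C : ℝ, 0 < C ∧ ∀ ε : ℝ, 0 < ε → ∃ N : ℕ, ∀ m n : ℕ,
      N ≤ m → N ≤ n → C * Real.log n ≤ m → C * Real.log m ≤ n →
      1 - ε ≤ shatteredProb m n := by
  refine ⟨100, by norm_num, fun ε hε => ?_⟩
  refine ⟨max 3 (Nat.ceil (5 * Real.log (8 / ε))), fun m n hm hn hCn hCm => ?_⟩
  have hm3 : 3 ≤ m := le_trans (le_max_left _ _) hm
  have hn3 : 3 ≤ n := le_trans (le_max_left _ _) hn
  have hmε : 5 * Real.log (8 / ε) ≤ (m : ℝ) := by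
    calc 5 * Real.log (8 / ε) ≤ (Nat.ceil (5 * Real.log (8 / ε)) : ℝ) := Nat.le_ceil _
      _ ≤ (m : ℝ) := by exact_mod_cast le_trans (le_max_right _ _) hm
  have hnε : 5 * Real.log (8 / ε) ≤ (n : ℝ) := by
    calc 5 * Real.log (8 / ε) ≤ (Nat.ceil (5 * Real.log (8 / ε)) : ℝ) := Nat.le_ceil _
      _ ≤ (n : ℝ) := by exact_mod_cast le_trans (le_max_right _ _) hn
  set B := (univ.filter fun M : Fin m → Fin n → Bool => ¬ Shattered M).card with hBdef
  have hBle : B ≤ 2 ^ (m * n) := by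
    rw [hBdef]
    calc (univ.filter fun M : Fin m → Fin n → Bool => ¬ Shattered M).card
        ≤ (univ : Finset (Fin m → Fin n → Bool)).card := Finset.card_filter_le _ _
      _ = 2 ^ (m * n) := by
          rw [Finset.card_univ]
          simp [Fintype.card_fun, ← pow_mul, mul_comm]
  have hpos : (0 : ℝ) < 2 ^ (m * n) := by positivity
  have hprob : shatteredProb m n = 1 - (B : ℝ) / 2 ^ (m * n) := by
    rw [shatteredProb, good_card, Nat.cast_sub hBle, sub_div]
    push_cast
    rw [div_self (ne_of_gt hpos)]
  have key : (B : ℝ) / 2 ^ (m * n) ≤ ε := by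
    have hcast : (B : ℝ) ≤
        ((4 * m ^ 3 * (6 ^ n * 2 ^ ((m - 3) * n))
          + 4 * n ^ 3 * (6 ^ m * 2 ^ ((n - 3) * m)) : ℕ) : ℝ) :=
      Nat.cast_le.mpr (bad_bound m n)
    have h1 : ((4 * m ^ 3 * (6 ^ n * 2 ^ ((m - 3) * n)) : ℕ) : ℝ) / 2 ^ (m * n)
        = 4 * (m : ℝ) ^ 3 * (3 / 4 : ℝ) ^ n := ratio_eq m n hm3
    have h2 : ((4 * n ^ 3 * (6 ^ m * 2 ^ ((n - 3) * m)) : ℕ) : ℝ) / 2 ^ (m * n)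
        = 4 * (n : ℝ) ^ 3 * (3 / 4 : ℝ) ^ m := by
      rw [mul_comm m n]; exact ratio_eq n m hn3
    calc (B : ℝ) / 2 ^ (m * n)
        ≤ _ / 2 ^ (m * n) := (div_le_div_iff_of_pos_right hpos).mpr hcast
      _ = 4 * (m : ℝ) ^ 3 * (3 / 4 : ℝ) ^ n + 4 * (n : ℝ) ^ 3 * (3 / 4 : ℝ) ^ m := by
          rw [Nat.cast_add, add_div, h1, h2]
      _ ≤ 4 * Real.exp (-(n : ℝ) / 5) + 4 * Real.exp (-(m : ℝ) / 5) :=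
          add_le_add (anal m n hCm) (anal n m hCn)
      _ ≤ ε / 2 + ε / 2 :=
          add_le_add (small_exp ε hε n hnε) (small_exp ε hε m hmε)
      _ = ε := by ring
  rw [hprob]
  linarith
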